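/- If π(y) ∝ π_ref(y) exp(r(y)/β) with β > 0 and π_ref of full support on a finite set Y, then for any two responses C, R, the reward difference satisfies r(C) − r(R) = β[log(π(C)/π_ref(C)) − log(π(R)/π_ref(R))]; hence the Bradley–Terry preference probability equals σ(β·Δ(C,R)) where Δ is the log-likelihood-ratio margin. -/

import Mathlib

/-- The logistic sigmoid `σ(z) = 1/(1 + e^{-z})`. -/
noncomputable def logistic (z : ℝ) : ℝ := 1 / (1 + Real.exp (-z))

/-- if `π(y) ∝ π_ref(y) exp(r(y)/β)` with `β > 0` and `π_ref` of full
support on a finite set, then `r(C) - r(R) = β [log(π(C)/π_ref(C)) - log(π(R)/π_ref(R))]`,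
and the Bradley–Terry preference probability equals `σ(β Δ(C,R))` where
`Δ(C,R) = log(π(C)/π(R)) - log(π_ref(C)/π_ref(R))`. -/
theorem dpo_implicit_reward_identity
    {Y : Type*} [Fintype Y] [Nonempty Y] (πref : Y → ℝ) (r : Y → ℝ) (β : ℝ)
    (hβ : 0 < β) (href : ∀ y, 0 < πref y) (hrefsum : ∑ y, πref y = 1)
    (π : Y → ℝ)
    (hπ : ∀ y, π y = πref y * Real.exp (r y / β) / ∑ z, πref z * Real.exp (r z / β))
    (C R : Y) :
    r C - r R = β * (Real.log (π C / πref C) - Real.log (π R / πref R)) ∧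
    logistic (r C - r R) =
      logistic (β * (Real.log (π C / π R) - Real.log (πref C / πref R))) := by
  set Z : ℝ := ∑ z, πref z * Real.exp (r z / β) with hZ
  have hZpos : 0 < Z := Finset.sum_pos (fun z _ => mul_pos (href z) (Real.exp_pos _))
    Finset.univ_nonempty
  have hratio : ∀ y, π y / πref y = Real.exp (r y / β) / Z := by
    intro y
    rw [hπ y, div_right_comm, mul_div_cancel_left₀ _ (href y).ne']
  have hlog : ∀ y, Real.log (π y / πref y) = r y / β - Real.log Z := by
    intro y
    rw [hratio y, Real.log_div (Real.exp_ne_zero _) (ne_of_gt hZpos), Real.log_exp]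
  have key : r C - r R = β * (Real.log (π C / πref C) - Real.log (π R / πref R)) := by
    rw [hlog C, hlog R]
    field_simp
    ring
  refine ⟨key, ?_⟩
  have hπpos : ∀ y, 0 < π y := fun y => by
    rw [hπ y]; exact div_pos (mul_pos (href y) (Real.exp_pos _)) hZpos
  have h2 : Real.log (π C / π R) - Real.log (πref C / πref R)
      = Real.log (π C / πref C) - Real.log (π R / πref R) := by
    rw [Real.log_div (ne_of_gt (hπpos C)) (ne_of_gt (hπpos R)),
        Real.log_div (ne_of_gt (href C)) (ne_of_gt (href R)),
        Real.log_div (ne_of_gt (hπpos C)) (ne_of_gt (href C)),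
        Real.log_div (ne_of_gt (hπpos R)) (ne_of_gt (href R))]
    ring
  rw [h2, ← key]
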